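/- Let p be a prime number and let a, b, c be positive rational numbers satisfying a² = p(b² + c²). Then a + b√p is not the square of any element of the field ℚ(√p). -/

import Mathlib

/-- If `p` is prime and `a, b, c` are positive rationals with
`a² = p (b² + c²)`, then `a + b √p` is not the square of an element of
`ℚ(√p)`. -/
theorem not_sq_in_adjoin_sqrt (p : ℕ) (hp : p.Prime) (a b c : ℚ)
    (ha : 0 < a) (hb : 0 < b) (hc : 0 < c)
    (habc : a ^ 2 = (p : ℚ) * (b ^ 2 + c ^ 2)) :
    ¬ ∃ x ∈ IntermediateField.adjoin ℚ {Real.sqrt (p : ℝ)},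
      x ^ 2 = (a : ℝ) + (b : ℝ) * Real.sqrt (p : ℝ) := by
  rintro ⟨x, hx, hsq⟩
  set s : ℝ := Real.sqrt (p : ℝ) with hs
  have hp0 : (0:ℝ) ≤ (p:ℝ) := by positivity
  have hs2 : s * s = (p : ℝ) := Real.mul_self_sqrt hp0
  have hirr : Irrational s := hp.irrational_sqrt
  -- s is integral over ℚ
  have hint : IsIntegral ℚ s := by
    refine ⟨Polynomial.X ^ 2 - Polynomial.C (p : ℚ), ?_, ?_⟩
    · apply Polynomial.monic_X_pow_sub_C _ (by norm_num)
    · simp [Polynomial.eval₂, sq, hs2]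
  have hx' : x ∈ Algebra.adjoin ℚ ({s} : Set ℝ) := by
    rw [← IntermediateField.adjoin_simple_toSubalgebra_of_isAlgebraic hint.isAlgebraic]
    exact hx
  -- every element of the adjoin is u + v s with u v rational
  have hrep : ∃ u v : ℚ, x = (u : ℝ) + (v : ℝ) * s := by
    refine Algebra.adjoin_induction ?_ ?_ ?_ ?_ hx'
    · rintro y rfl; exact ⟨0, 1, by simp⟩
    · intro q; exact ⟨q, 0, by simp [Algebra.algebraMap_eq_smul_one]⟩
    · rintro y z _ _ ⟨u₁, v₁, rfl⟩ ⟨u₂, v₂, rfl⟩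
      exact ⟨u₁ + u₂, v₁ + v₂, by push_cast; ring⟩
    · rintro y z _ _ ⟨u₁, v₁, rfl⟩ ⟨u₂, v₂, rfl⟩
      refine ⟨u₁ * u₂ + p * v₁ * v₂, u₁ * v₂ + u₂ * v₁, ?_⟩
      push_cast
      linear_combination (v₁:ℝ) * (v₂:ℝ) * hs2
  obtain ⟨u, v, rfl⟩ := hrep
  -- uniqueness of representation
  have key : ∀ q₁ q₂ : ℚ, (q₁ : ℝ) + (q₂ : ℝ) * s = 0 → q₁ = 0 ∧ q₂ = 0 := by
    intro q₁ q₂ h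
    by_cases hq2 : q₂ = 0
    · subst hq2; simp at h; exact ⟨by exact_mod_cast h, rfl⟩
    · exfalso
      apply hirr
      refine ⟨-q₁ / q₂, ?_⟩
      have hq2' : (q₂ : ℝ) ≠ 0 := by exact_mod_cast hq2
      push_cast
      field_simp
      linarith
  have hmain : ((u ^ 2 + p * v ^ 2 - a : ℚ) : ℝ) + ((2 * u * v - b : ℚ) : ℝ) * s = 0 := by
    push_cast
    nlinarith [hsq, hs2]
  obtain ⟨h1, h2⟩ := key _ _ hmain
  have e1 : u ^ 2 + p * v ^ 2 = a := by linarith [sub_eq_zero.mp (by linarith : u ^ 2 + p * v ^ 2 - a = 0)]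
  have e2 : 2 * u * v = b := by linarith
  -- derive (u² - p v²)² = p c²
  have e3 : (u ^ 2 - p * v ^ 2) ^ 2 = (p : ℚ) * c ^ 2 := by linear_combination habc + (u^2+(p:ℚ)*v^2+a)*e1 - (p:ℚ)*(2*u*v+b)*e2
  -- so p is a square of a rational, contradiction
  set r : ℚ := (u ^ 2 - p * v ^ 2) / c with hr
  have hc0 : c ≠ 0 := ne_of_gt hc
  have hr2 : r ^ 2 = (p : ℚ) := by
    rw [hr]; field_simp; linarith [e3]
  apply hirr
  refine ⟨|r|, ?_⟩
  have : ((|r| : ℚ) : ℝ) = |(r : ℝ)| := by push_cast; ring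
  rw [this]
  have : ((r : ℝ)) ^ 2 = (p : ℝ) := by exact_mod_cast hr2
  rw [hs, ← this, Real.sqrt_sq_eq_abs]
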